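/- Let φ, ψ : ℝ × ℝⁿ → ℝⁿ be smooth maps such that φ(0,·) = ψ(0,·) = id and φ(t,·), ψ(t,·) are diffeomorphisms of ℝⁿ for every t, with smooth inverse families φ⁻¹, ψ⁻¹ (i.e. (t,x) ↦ φ(t,·)⁻¹(x) and (t,x) ↦ ψ(t,·)⁻¹(x) are smooth). Let m, n ≥ 1 and X, Y : ℝⁿ → ℝⁿ be such that for every x: ∂ʲ_t φ(0,x) = 0 for 1 ≤ j ≤ m−1 and ∂ᵐ_t φ(0,x) = m!·X(x), and ∂ʲ_t ψ(0,x) = 0 for 1 ≤ j ≤ n−1 and ∂ⁿ_t ψ(0,x) = n!·Y(x). Then the commutator family [φ,ψ](t,x) = ψ(t,·)⁻¹(φ(t,·)⁻¹(ψ(t, φ(t,x)))) satisfies, for every x: ∂ˡ_t [φ,ψ](0,x) = 0 for 1 ≤ l ≤ m+n−1, and ∂^{m+n}_t [φ,ψ](0,x) = (m+n)!·[X,Y](x). -/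

import Mathlib

noncomputable section

open Filter Asymptotics Set Topology
noncomputable section
namespace CommFlows
variable {F : Type*} [NormedAddCommGroup F] [NormedSpace ℝ F]
variable {E : Type*} [NormedAddCommGroup E] [NormedSpace ℝ E]

lemma iteratedDerivWithin_eq (f : ℝ → F) (hf : ContDiff ℝ (⊤:ℕ∞) f) {s : Set ℝ}
    (hs : UniqueDiffOn ℝ s) (k : ℕ) :
    ∀ y ∈ s, iteratedDerivWithin k f s y = iteratedDeriv k f y := by
  induction k with
  | zero => intro y _; simp
  | succ k ih =>
    intro y hy
    rw [iteratedDerivWithin_succ, iteratedDeriv_succ, derivWithin_congr ih (ih y hy)]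
    exact ((hf.differentiable_iteratedDeriv k (by exact_mod_cast lt_top_iff_ne_top.2 (by simp))) y).derivWithin (hs y hy)

/-- Global Taylor bound on `[-1,1]` for smooth functions. -/
lemma taylor_bound_global (f : ℝ → F) (hf : ContDiff ℝ (⊤:ℕ∞) f) (N : ℕ) (C : ℝ)
    (hC : ∀ s ∈ Icc (-1:ℝ) 1, ‖iteratedDeriv (N+1) f s‖ ≤ C) :
    ∀ t ∈ Icc (-1:ℝ) 1,
      ‖f t - ∑ i ∈ Finset.range (N+1), (t^i / i.factorial) • iteratedDeriv i f 0‖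
        ≤ C * |t|^(N+1) / N.factorial := by
  -- first the case t ∈ [0,1] for arbitrary f
  have key : ∀ (f : ℝ → F), ContDiff ℝ (⊤:ℕ∞) f →
      (∀ s ∈ Icc (-1:ℝ) 1, ‖iteratedDeriv (N+1) f s‖ ≤ C) →
      ∀ t ∈ Icc (0:ℝ) 1,
      ‖f t - ∑ i ∈ Finset.range (N+1), (t^i / i.factorial) • iteratedDeriv i f 0‖
        ≤ C * |t|^(N+1) / N.factorial := by
    intro f hf hC t ht
    have h01 : (0:ℝ) ≤ 1 := zero_le_one
    have hsub : Icc (0:ℝ) 1 ⊆ Icc (-1:ℝ) 1 := Icc_subset_Icc (by norm_num) le_rfl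
    have hud : UniqueDiffOn ℝ (Icc (0:ℝ) 1) := uniqueDiffOn_Icc zero_lt_one
    have hbd := taylor_mean_remainder_bound (f := f) (n := N) h01
      (hf.contDiffOn.of_le (by exact_mod_cast le_top)) ht
      (fun y hy => by
        rw [iteratedDerivWithin_eq f hf hud (N+1) y hy]; exact hC y (hsub hy))
    rw [taylor_within_apply] at hbd
    have h0mem : (0:ℝ) ∈ Icc (0:ℝ) 1 := ⟨le_rfl, zero_le_one⟩
    have : ∑ k ∈ Finset.range (N+1), (((k.factorial:ℝ))⁻¹ * (t - 0) ^ k) •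
          iteratedDerivWithin k f (Icc (0:ℝ) 1) 0
        = ∑ i ∈ Finset.range (N+1), (t^i / i.factorial) • iteratedDeriv i f 0 := by
      refine Finset.sum_congr rfl fun i _ => ?_
      rw [iteratedDerivWithin_eq f hf hud i 0 h0mem, sub_zero]
      congr 1
      field_simp
    rw [this] at hbd
    refine hbd.trans (le_of_eq ?_)
    rw [sub_zero, abs_of_nonneg ht.1]
  intro t ht
  rcases le_or_gt 0 t with hpos | hneg
  · exact key f hf hC t ⟨hpos, ht.2⟩
  · -- reflect
    have hfneg : ContDiff ℝ (⊤:ℕ∞) (fun s => f (-s)) := hf.comp contDiff_neg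
    have hCneg : ∀ s ∈ Icc (-1:ℝ) 1, ‖iteratedDeriv (N+1) (fun s => f (-s)) s‖ ≤ C := by
      intro s hs
      rw [iteratedDeriv_comp_neg]
      rw [norm_smul]
      have : ‖((-1:ℝ))^(N+1)‖ = 1 := by simp
      rw [this, one_mul]
      exact hC (-s) ⟨by linarith [hs.2], by linarith [hs.1]⟩
    have hmem : -t ∈ Icc (0:ℝ) 1 := ⟨by linarith, by linarith [ht.1]⟩
    have hb := key _ hfneg hCneg (-t) hmem
    have hsum : ∑ i ∈ Finset.range (N+1), ((-t)^i / i.factorial) •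
          iteratedDeriv i (fun s => f (-s)) 0
        = ∑ i ∈ Finset.range (N+1), (t^i / i.factorial) • iteratedDeriv i f 0 := by
      refine Finset.sum_congr rfl fun i _ => ?_
      rw [iteratedDeriv_comp_neg, neg_zero, smul_smul]
      congr 1
      rw [div_mul_eq_mul_div]
      congr 1
      rw [← mul_pow]
      norm_num
    rw [neg_neg, hsum, abs_neg] at hb
    exact hb

/-- partial derivative in the time direction. -/
def ptd (g : ℝ × E → E) : ℝ × E → E := fun p => fderiv ℝ g p (1, 0)

lemma contDiff_ptd {g : ℝ × E → E} (hg : ContDiff ℝ (⊤:ℕ∞) g) : ContDiff ℝ (⊤:ℕ∞) (ptd g) :=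
  (ContinuousLinearMap.apply ℝ E ((1:ℝ),(0:E))).contDiff.comp (hg.fderiv_right (by simp))

lemma contDiff_ptd_iter {g : ℝ × E → E} (hg : ContDiff ℝ (⊤:ℕ∞) g) (i : ℕ) :
    ContDiff ℝ (⊤:ℕ∞) (ptd^[i] g) := by
  induction i generalizing g with
  | zero => exact hg
  | succ i ih =>
    rw [Function.iterate_succ_apply]
    exact ih (contDiff_ptd hg)

lemma hasDerivAt_ptd {g : ℝ × E → E} (hg : ContDiff ℝ (⊤:ℕ∞) g) (y : E) (t : ℝ) :
    HasDerivAt (fun s => g (s,y)) (ptd g (t,y)) t :=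
  (hg.differentiable (by simp) (t,y)).hasFDerivAt.comp_hasDerivAt t
    ((hasDerivAt_id t).prodMk (hasDerivAt_const t y))

lemma iteratedDeriv_eq_ptd_iter {g : ℝ × E → E} (hg : ContDiff ℝ (⊤:ℕ∞) g) (i : ℕ) (y : E) (t : ℝ) :
    iteratedDeriv i (fun s => g (s,y)) t = ptd^[i] g (t,y) := by
  induction i generalizing g with
  | zero => simp
  | succ i ih =>
    rw [iteratedDeriv_succ']
    have hd : deriv (fun s => g (s,y)) = fun s => ptd g (s,y) :=
      funext fun s => (hasDerivAt_ptd hg y s).deriv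
    rw [hd, ih (contDiff_ptd hg), Function.iterate_succ_apply]

/-- Taylor coefficients of a smooth family. -/
def fcoef (g : ℝ × E → E) (i : ℕ) (y : E) : E := ((i.factorial : ℝ))⁻¹ • ptd^[i] g (0, y)

lemma iteratedDeriv_family (g : ℝ × E → E) (hg : ContDiff ℝ (⊤:ℕ∞) g) (i : ℕ) (y : E) :
    iteratedDeriv i (fun s => g (s,y)) 0 = (i.factorial : ℝ) • fcoef g i y := by
  rw [iteratedDeriv_eq_ptd_iter hg, fcoef, smul_smul]
  rw [mul_inv_cancel₀ (by exact_mod_cast i.factorial_ne_zero), one_smul]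

lemma contDiff_fcoef {g : ℝ × E → E} (hg : ContDiff ℝ (⊤:ℕ∞) g) (i : ℕ) :
    ContDiff ℝ (⊤:ℕ∞) (fun y => fcoef g i y) := by
  have h1 : ContDiff ℝ (⊤:ℕ∞) (fun y : E => ptd^[i] g (0, y)) :=
    (contDiff_ptd_iter hg i).comp (contDiff_const.prodMk contDiff_id)
  exact h1.const_smul _

lemma fcoef_zero {g : ℝ × E → E} (y : E) : fcoef g 0 y = g (0, y) := by
  simp [fcoef]

/-- Uniform Taylor expansion of a smooth family along a continuous curve. -/
lemma family_expand [ProperSpace E] {g : ℝ × E → E} (hg : ContDiff ℝ (⊤:ℕ∞) g) (N : ℕ)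
    {c : ℝ → E} (hc : Continuous c) {x : E} (hc0 : c 0 = x) :
    (fun t => g (t, c t) - ∑ i ∈ Finset.range (N+1), t^i • fcoef g i (c t)) =o[𝓝 (0:ℝ)]
      fun t => t^N := by
  obtain ⟨C, hC⟩ := (isCompact_Icc (a := (-1:ℝ)) (b := 1)).prod
    (isCompact_closedBall x 1) |>.exists_bound_of_continuousOn
      ((contDiff_ptd_iter hg (N+1)).continuous.continuousOn)
  have key : ∀ y ∈ Metric.closedBall x 1, ∀ t ∈ Icc (-1:ℝ) 1,
      ‖g (t,y) - ∑ i ∈ Finset.range (N+1), t^i • fcoef g i y‖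
        ≤ C * |t|^(N+1) / N.factorial := by
    intro y hy t ht
    have hfy : ContDiff ℝ (⊤:ℕ∞) (fun s => g (s,y)) :=
      hg.comp (contDiff_id.prodMk contDiff_const)
    have hb := taylor_bound_global (fun s => g (s,y)) hfy N C (fun s hs => by
      rw [iteratedDeriv_eq_ptd_iter hg]
      exact hC (s,y) (Set.mk_mem_prod hs hy)) t ht
    have hsum : ∑ i ∈ Finset.range (N+1), (t^i / i.factorial) •
          iteratedDeriv i (fun s => g (s,y)) 0
        = ∑ i ∈ Finset.range (N+1), t^i • fcoef g i y := by
      refine Finset.sum_congr rfl fun i _ => ?_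
      rw [iteratedDeriv_family g hg, smul_smul,
        div_mul_cancel₀ _ (by exact_mod_cast i.factorial_ne_zero : (i.factorial:ℝ) ≠ 0)]
    rw [hsum] at hb
    exact hb
  have hev : ∀ᶠ t in 𝓝 (0:ℝ),
      ‖g (t, c t) - ∑ i ∈ Finset.range (N+1), t^i • fcoef g i (c t)‖
        ≤ (C / N.factorial) * ‖t^(N+1)‖ := by
    have h1 : ∀ᶠ t in 𝓝 (0:ℝ), t ∈ Icc (-1:ℝ) 1 :=
      Icc_mem_nhds (by norm_num) (by norm_num)
    have h2 : ∀ᶠ t in 𝓝 (0:ℝ), c t ∈ Metric.closedBall x 1 := by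
      have := hc.tendsto 0
      rw [hc0] at this
      exact this (Metric.closedBall_mem_nhds x one_pos)
    filter_upwards [h1, h2] with t ht hct
    refine (key (c t) hct t ht).trans (le_of_eq ?_)
    rw [norm_pow, Real.norm_eq_abs]
    ring
  have hbig : (fun t => g (t, c t) - ∑ i ∈ Finset.range (N+1), t^i • fcoef g i (c t))
      =O[𝓝 (0:ℝ)] fun t => t^(N+1) := by
    rw [isBigO_iff]
    exact ⟨C / N.factorial, hev⟩
  exact hbig.trans_isLittleO (isLittleO_pow_pow N.lt_succ_self)

lemma smul_const_isBigO (v : F) (k : ℕ) :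
    (fun t : ℝ => t^k • v) =O[𝓝 (0:ℝ)] fun t => t^k := by
  rw [isBigO_iff]
  refine ⟨‖v‖, Eventually.of_forall fun t => ?_⟩
  rw [norm_smul, mul_comm]

lemma tail_littleO (v : ℕ → F) (N r : ℕ) (hv : ∀ i, i ≤ r → v i = 0) :
    (fun t : ℝ => ∑ i ∈ Finset.range (N+1), t^i • v i) =o[𝓝 (0:ℝ)] fun t => t^r := by
  have hterm : ∀ i ∈ Finset.range (N+1),
      (fun t : ℝ => t^i • v i) =o[𝓝 (0:ℝ)] fun t => t^r := by
    intro i _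
    rcases le_or_gt i r with hle | hlt
    · simp only [hv i hle, smul_zero]
      exact isLittleO_zero _ _
    · exact (smul_const_isBigO (v i) i).trans_isLittleO (isLittleO_pow_pow hlt)
  simpa using IsLittleO.fun_sum hterm

lemma sum_sub_littleO (w w' : ℕ → F) (N r : ℕ) (hr : ∀ i, i ≤ r → w i = w' i) :
    (fun t : ℝ => (∑ i ∈ Finset.range (N+1), t^i • w i)
      - ∑ i ∈ Finset.range (N+1), t^i • w' i) =o[𝓝 (0:ℝ)] fun t => t^r := by
  have heq : (fun t : ℝ => (∑ i ∈ Finset.range (N+1), t^i • w i)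
      - ∑ i ∈ Finset.range (N+1), t^i • w' i)
      = fun t => ∑ i ∈ Finset.range (N+1), t^i • (w i - w' i) := by
    funext t
    rw [← Finset.sum_sub_distrib]
    exact Finset.sum_congr rfl fun i _ => (smul_sub _ _ _).symm
  rw [heq]
  exact tail_littleO _ N r fun i h => by rw [hr i h, sub_self]

lemma smul_pow_littleO {f : ℝ → F} {k : ℕ} (h : f =o[𝓝 (0:ℝ)] fun t => t^k) (i : ℕ) :
    (fun t => t^i • f t) =o[𝓝 (0:ℝ)] fun t => t^(i+k) := by
  have := (isBigO_refl (fun t : ℝ => t^i) (𝓝 (0:ℝ))).smul_isLittleO h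
  exact this.congr (fun t => rfl) (fun t => by simp [smul_eq_mul, pow_add])

lemma pow_isBigO_pow {r s : ℕ} (h : r ≤ s) :
    (fun t : ℝ => t^s) =O[𝓝 (0:ℝ)] fun t => t^r := by
  rcases eq_or_lt_of_le h with rfl | hlt
  · exact isBigO_refl _ _
  · exact (isLittleO_pow_pow hlt).isBigO

lemma comp_expand {w : E → E} {x : E} (hw : DifferentiableAt ℝ w x) {c : ℝ → E} {k : ℕ}
    (hk : 1 ≤ k) {a : E} (h : (fun t => c t - x - t^k • a) =o[𝓝 (0:ℝ)] fun t => t^k) :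
    (fun t => w (c t) - w x - t^k • fderiv ℝ w x a) =o[𝓝 (0:ℝ)] fun t => t^k := by
  have hO : (fun t => c t - x) =O[𝓝 (0:ℝ)] fun t => t^k := by
    have := h.isBigO.add (smul_const_isBigO a k)
    exact this.congr (fun t => by abel) (fun t => rfl)
  have hc0 : Tendsto c (𝓝 (0:ℝ)) (𝓝 x) := by
    have h1 : Tendsto (fun t : ℝ => t^k) (𝓝 (0:ℝ)) (𝓝 (0:ℝ)) := by
      simpa using (continuous_pow k).tendsto (0:ℝ) |>.congr' (by
        filter_upwards with t; rfl) |>.mono_right (by rw [zero_pow (by omega : k ≠ 0)])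
    have h2 : Tendsto (fun t => c t - x) (𝓝 (0:ℝ)) (𝓝 0) := hO.trans_tendsto h1
    have := h2.add_const x
    simpa using this
  have hdiff : (fun y => w y - w x - fderiv ℝ w x (y - x)) =o[𝓝 x] fun y => y - x :=
    hw.hasFDerivAt.isLittleO
  have hcomp : (fun t => w (c t) - w x - fderiv ℝ w x (c t - x)) =o[𝓝 (0:ℝ)] fun t => t^k :=
    (hdiff.comp_tendsto hc0).trans_isBigO hO
  have hf' : (fun t => fderiv ℝ w x (c t - x - t^k • a)) =o[𝓝 (0:ℝ)] fun t => t^k :=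
    ((fderiv ℝ w x).isBigO_comp _ _).trans_isLittleO h
  have := hcomp.add hf'
  refine this.congr (fun t => ?_) (fun t => rfl)
  have hmap : fderiv ℝ w x (c t - x - t^k • a)
      = fderiv ℝ w x (c t - x) - t^k • fderiv ℝ w x a := by
    rw [map_sub, map_smul]
  rw [hmap]
  abel

lemma polyvanish : ∀ (N : ℕ) (e : ℕ → F),
    ((fun t : ℝ => ∑ i ∈ Finset.range (N+1), t^i • e i) =o[𝓝[≠] (0:ℝ)] fun t => t^N) →
    ∀ i ≤ N, e i = 0 := by
  intro N
  induction N with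
  | zero =>
    intro e h i hi
    interval_cases i
    have h1 : Tendsto (fun t : ℝ => ∑ i ∈ Finset.range 1, t^i • e i) (𝓝[≠] (0:ℝ))
        (𝓝 (e 0)) := by
      simp only [Finset.sum_range_one, pow_zero, one_smul]
      exact tendsto_const_nhds
    have h2 : Tendsto (fun t : ℝ => ∑ i ∈ Finset.range 1, t^i • e i) (𝓝[≠] (0:ℝ))
        (𝓝 0) := by
      rw [← isLittleO_one_iff ℝ]
      refine h.trans_isBigO ?_
      simp only [pow_zero]
      exact isBigO_const_const _ one_ne_zero _
    exact tendsto_nhds_unique h1 h2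
  | succ N ih =>
    intro e h
    have hcont : Tendsto (fun t : ℝ => ∑ i ∈ Finset.range (N+2), t^i • e i) (𝓝[≠] (0:ℝ))
        (𝓝 (e 0)) := by
      have hco : Continuous (fun t : ℝ => ∑ i ∈ Finset.range (N+2), t^i • e i) := by
        exact continuous_finset_sum _ fun i _ => (continuous_pow i).smul continuous_const
      have hten : Tendsto (fun t : ℝ => ∑ i ∈ Finset.range (N+2), t^i • e i) (𝓝[≠] (0:ℝ))
          (𝓝 (∑ i ∈ Finset.range (N+2), (0:ℝ)^i • e i)) :=
        (hco.tendsto 0).mono_left nhdsWithin_le_nhds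
      have hval : ∑ i ∈ Finset.range (N+2), (0:ℝ)^i • e i = e 0 := by
        rw [Finset.sum_eq_single_of_mem 0 (Finset.mem_range.mpr (by omega))]
        · simp
        · intro i _ hi
          simp [zero_pow hi]
      rwa [hval] at hten
    have hzero : Tendsto (fun t : ℝ => ∑ i ∈ Finset.range (N+2), t^i • e i) (𝓝[≠] (0:ℝ))
        (𝓝 0) := by
      refine h.trans_tendsto ?_
      have : Tendsto (fun t : ℝ => t^(N+1)) (𝓝 (0:ℝ)) (𝓝 ((0:ℝ)^(N+1))) :=
        (continuous_pow (N+1)).tendsto 0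
      rw [zero_pow (by omega : N+1 ≠ 0)] at this
      exact this.mono_left nhdsWithin_le_nhds
    have he0 : e 0 = 0 := tendsto_nhds_unique hcont hzero
    have hdiv : (fun t : ℝ => ∑ i ∈ Finset.range (N+1), t^i • e (i+1)) =o[𝓝[≠] (0:ℝ)]
        fun t => t^N := by
      rw [isLittleO_iff] at h ⊢
      intro ε hε
      filter_upwards [h hε, self_mem_nhdsWithin] with t ht hne
      have hne' : t ≠ 0 := hne
      have hfac : ∑ i ∈ Finset.range (N+2), t^i • e i
          = t • ∑ i ∈ Finset.range (N+1), t^i • e (i+1) := by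
        rw [Finset.sum_range_succ', he0, Finset.smul_sum]
        simp only [pow_zero, one_smul, smul_zero, add_zero]
        exact Finset.sum_congr rfl fun i _ => by rw [smul_smul, ← pow_succ']
      rw [hfac, norm_smul] at ht
      have hpow : ‖t^(N+1)‖ = ‖t‖ * ‖t^N‖ := by
        rw [norm_pow, norm_pow, pow_succ']
      rw [hpow, ← mul_assoc, mul_comm ε ‖t‖, mul_assoc] at ht
      have htpos : 0 < ‖t‖ := norm_pos_iff.mpr hne'
      exact le_of_mul_le_mul_left ht htpos
    have hrec := ih (fun i => e (i+1)) hdiv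
    intro i hi
    cases i with
    | zero => exact he0
    | succ i => exact hrec i (by omega)

/-- Cancellation: composing with a smooth family through the identity
preserves little-o closeness of curves. -/
lemma cancel [ProperSpace E] {g : ℝ × E → E} (hg : ContDiff ℝ (⊤:ℕ∞) g)
    (hg0 : ∀ y, g (0,y) = y) {c1 c2 : ℝ → E} (h1 : Continuous c1) (h2 : Continuous c2)
    {z : E} (hz1 : c1 0 = z) (hz2 : c2 0 = z) (N : ℕ)
    (h : (fun t => g (t, c1 t) - g (t, c2 t)) =o[𝓝 (0:ℝ)] fun t => t^N) :
    (fun t => c1 t - c2 t) =o[𝓝 (0:ℝ)] fun t => t^N := by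
  have hLip : ∀ i : ℕ, (fun t => fcoef g i (c1 t) - fcoef g i (c2 t)) =O[𝓝 (0:ℝ)]
      (fun t => c1 t - c2 t) := by
    intro i
    obtain ⟨K, s, hs, hK⟩ :=
      (((contDiff_fcoef hg i).of_le (by exact_mod_cast le_top)).contDiffAt
        (x := z)).exists_lipschitzOnWith
    have ht1 : ∀ᶠ t in 𝓝 (0:ℝ), c1 t ∈ s := by
      have := h1.tendsto 0
      rw [hz1] at this
      exact this hs
    have ht2 : ∀ᶠ t in 𝓝 (0:ℝ), c2 t ∈ s := by
      have := h2.tendsto 0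
      rw [hz2] at this
      exact this hs
    rw [isBigO_iff]
    refine ⟨K, ?_⟩
    filter_upwards [ht1, ht2] with t hc1 hc2
    have := hK.dist_le_mul (c1 t) hc1 (c2 t) hc2
    rwa [dist_eq_norm, dist_eq_norm] at this
  suffices hmain : ∀ r : ℕ, r ≤ N → (fun t => c1 t - c2 t) =o[𝓝 (0:ℝ)] fun t => t^r by
    exact hmain N le_rfl
  intro r
  induction r with
  | zero =>
    intro _
    have hten : Tendsto (fun t => c1 t - c2 t) (𝓝 (0:ℝ)) (𝓝 0) := by
      have := ((h1.sub h2).tendsto 0)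
      rwa [Pi.sub_apply, hz1, hz2, sub_self] at this
    simp only [pow_zero]
    exact (isLittleO_one_iff ℝ).mpr hten
  | succ r ihr =>
    intro hrN
    have ih := ihr (by omega)
    have E1 := family_expand hg N h1 hz1
    have E2 := family_expand hg N h2 hz2
    have hterm : ∀ i ∈ Finset.range N, (fun t : ℝ =>
        t^(i+1) • (fcoef g (i+1) (c1 t) - fcoef g (i+1) (c2 t))) =o[𝓝 (0:ℝ)]
          fun t => t^(r+1) := by
      intro i _
      have hΔ : (fun t => fcoef g (i+1) (c1 t) - fcoef g (i+1) (c2 t)) =o[𝓝 (0:ℝ)]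
          fun t => t^r := (hLip (i+1)).trans_isLittleO ih
      exact (smul_pow_littleO hΔ (i+1)).trans_isBigO (pow_isBigO_pow (by omega))
    have hsum := IsLittleO.fun_sum hterm
    have halg : (fun t => c1 t - c2 t) = fun t =>
        ((g (t, c1 t) - g (t, c2 t))
         - ((g (t, c1 t) - ∑ i ∈ Finset.range (N+1), t^i • fcoef g i (c1 t))
            - (g (t, c2 t) - ∑ i ∈ Finset.range (N+1), t^i • fcoef g i (c2 t))))
         - ∑ i ∈ Finset.range N, t^(i+1) • (fcoef g (i+1) (c1 t) - fcoef g (i+1) (c2 t)) := by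
      funext t
      have hs1 : ∑ i ∈ Finset.range (N+1), t^i • fcoef g i (c1 t)
          = (∑ i ∈ Finset.range N, t^(i+1) • fcoef g (i+1) (c1 t)) + c1 t := by
        rw [Finset.sum_range_succ']
        simp [fcoef_zero, hg0]
      have hs2 : ∑ i ∈ Finset.range (N+1), t^i • fcoef g i (c2 t)
          = (∑ i ∈ Finset.range N, t^(i+1) • fcoef g (i+1) (c2 t)) + c2 t := by
        rw [Finset.sum_range_succ']
        simp [fcoef_zero, hg0]
      have hT : ∑ i ∈ Finset.range N, t^(i+1) • (fcoef g (i+1) (c1 t) - fcoef g (i+1) (c2 t))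
          = (∑ i ∈ Finset.range N, t^(i+1) • fcoef g (i+1) (c1 t))
            - ∑ i ∈ Finset.range N, t^(i+1) • fcoef g (i+1) (c2 t) := by
        rw [← Finset.sum_sub_distrib]
        exact Finset.sum_congr rfl fun i _ => smul_sub _ _ _
      rw [hs1, hs2, hT]
      abel
    rw [halg]
    have hN : r + 1 ≤ N := hrN
    exact ((h.trans_isBigO (pow_isBigO_pow hN)).sub
      ((E1.sub E2).trans_isBigO (pow_isBigO_pow hN))).sub hsum

/-- Taylor-Peano expansion for a smooth curve. -/
lemma curve_taylor (f : ℝ → F) (hf : ContDiff ℝ (⊤:ℕ∞) f) (N : ℕ) :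
    (fun t => f t - ∑ i ∈ Finset.range (N+1),
        t^i • (((i.factorial : ℝ))⁻¹ • iteratedDeriv i f 0))
      =o[𝓝 (0:ℝ)] fun t => t^N := by
  obtain ⟨C, hC⟩ := (isCompact_Icc (a := (-1:ℝ)) (b := 1)).exists_bound_of_continuousOn
    ((hf.continuous_iteratedDeriv (N+1) (by exact_mod_cast le_top)).continuousOn)
  have hb := taylor_bound_global f hf N C hC
  have hsum : ∀ t : ℝ, ∑ i ∈ Finset.range (N+1), (t^i / i.factorial) • iteratedDeriv i f 0
      = ∑ i ∈ Finset.range (N+1), t^i • (((i.factorial : ℝ))⁻¹ • iteratedDeriv i f 0) := by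
    intro t
    refine Finset.sum_congr rfl fun i _ => ?_
    rw [smul_smul, div_eq_mul_inv]
  have hev : ∀ᶠ t in 𝓝 (0:ℝ),
      ‖f t - ∑ i ∈ Finset.range (N+1),
        t^i • (((i.factorial : ℝ))⁻¹ • iteratedDeriv i f 0)‖
        ≤ (C / N.factorial) * ‖t^(N+1)‖ := by
    filter_upwards [Icc_mem_nhds (by norm_num : (-1:ℝ) < 0) (by norm_num : (0:ℝ) < 1)] with t ht
    have := hb t ht
    rw [hsum t] at this
    refine this.trans (le_of_eq ?_)
    rw [norm_pow, Real.norm_eq_abs]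
    ring
  have hbig : (fun t => f t - ∑ i ∈ Finset.range (N+1),
      t^i • (((i.factorial : ℝ))⁻¹ • iteratedDeriv i f 0)) =O[𝓝 (0:ℝ)] fun t => t^(N+1) := by
    rw [isBigO_iff]
    exact ⟨C / N.factorial, hev⟩
  exact hbig.trans_isLittleO (isLittleO_pow_pow N.lt_succ_self)

lemma smul_pow_bigO {f : ℝ → F} {k : ℕ} (h : f =O[𝓝 (0:ℝ)] fun t => t^k) (i : ℕ) :
    (fun t => t^i • f t) =O[𝓝 (0:ℝ)] fun t => t^(i+k) := by
  have := (isBigO_refl (fun t : ℝ => t^i) (𝓝 (0:ℝ))).smul h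
  exact this.congr (fun t => rfl) (fun t => by simp [smul_eq_mul, pow_add])

lemma single_sum (N j : ℕ) (hj : j ≤ N) (v : F) (t : ℝ) :
    ∑ i ∈ Finset.range (N+1), t^i • (if i = j then v else 0) = t^j • v := by
  rw [Finset.sum_eq_single_of_mem j (Finset.mem_range.mpr (by omega))]
  · simp
  · intro i _ hij
    simp [hij]

lemma sum_ite_const (N j : ℕ) (hj : j ≤ N) (z : F) :
    ∑ i ∈ Finset.range (N+1), (if i = j then z else 0) = z := by
  rw [Finset.sum_eq_single_of_mem j (Finset.mem_range.mpr (by omega))]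
  · simp
  · intro i _ hij
    simp [hij]

set_option maxHeartbeats 1000000 in
lemma main [ProperSpace E] (gφ gψ gφi gψi : ℝ × E → E)
    (hφ : ContDiff ℝ (⊤:ℕ∞) gφ) (hψ : ContDiff ℝ (⊤:ℕ∞) gψ)
    (hφi : ContDiff ℝ (⊤:ℕ∞) gφi) (hψi : ContDiff ℝ (⊤:ℕ∞) gψi)
    (hφ0 : ∀ y, gφ (0,y) = y) (hψ0 : ∀ y, gψ (0,y) = y)
    (hφinv2 : ∀ t y, gφ (t, gφi (t,y)) = y)
    (hψinv2 : ∀ t y, gψ (t, gψi (t,y)) = y)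
    (hφinv1 : ∀ t y, gφi (t, gφ (t,y)) = y)
    (hψinv1 : ∀ t y, gψi (t, gψ (t,y)) = y)
    (m n : ℕ) (hm : 1 ≤ m) (hn : 1 ≤ n) (X Y : E → E)
    (hX : ∀ y, (∀ j, 1 ≤ j → j < m → iteratedDeriv j (fun t => gφ (t,y)) 0 = 0) ∧
      iteratedDeriv m (fun t => gφ (t,y)) 0 = (m.factorial : ℝ) • X y)
    (hY : ∀ y, (∀ j, 1 ≤ j → j < n → iteratedDeriv j (fun t => gψ (t,y)) 0 = 0) ∧
      iteratedDeriv n (fun t => gψ (t,y)) 0 = (n.factorial : ℝ) • Y y)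
    (x : E) :
    (∀ l, 1 ≤ l → l < m + n →
        iteratedDeriv l (fun t => gψi (t, gφi (t, gψ (t, gφ (t,x))))) 0 = 0) ∧
      iteratedDeriv (m + n) (fun t => gψi (t, gφi (t, gψ (t, gφ (t,x))))) 0 =
        ((m + n).factorial : ℝ) • (fderiv ℝ Y x (X x) - fderiv ℝ X x (Y x)) := by
  set N := m + n with hNdef
  have hN2 : 2 ≤ N := by omega
  have hmN : m ≤ N := by omega
  have hnN : n ≤ N := by omega
  have hnltN : n < N := by omega
  have hmltN : m < N := by omega
  -- basic coefficient facts
  have hfΦ0 : ∀ y, fcoef gφ 0 y = y := fun y => by rw [fcoef_zero, hφ0]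
  have hfΨ0 : ∀ y, fcoef gψ 0 y = y := fun y => by rw [fcoef_zero, hψ0]
  have hfacne : ∀ i : ℕ, ((i.factorial : ℝ)) ≠ 0 :=
    fun i => by exact_mod_cast i.factorial_ne_zero
  have hΦ : ∀ i, 1 ≤ i → i < m → ∀ y, fcoef gφ i y = 0 := by
    intro i h1 h2 y
    have h := (hX y).1 i h1 h2
    rw [iteratedDeriv_family gφ hφ] at h
    exact (smul_eq_zero.mp h).resolve_left (hfacne i)
  have hΨ : ∀ i, 1 ≤ i → i < n → ∀ y, fcoef gψ i y = 0 := by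
    intro i h1 h2 y
    have h := (hY y).1 i h1 h2
    rw [iteratedDeriv_family gψ hψ] at h
    exact (smul_eq_zero.mp h).resolve_left (hfacne i)
  have hΦm : ∀ y, fcoef gφ m y = X y := by
    intro y
    have h := (hX y).2
    rw [iteratedDeriv_family gφ hφ] at h
    exact smul_right_injective E (hfacne m) h
  have hΨn : ∀ y, fcoef gψ n y = Y y := by
    intro y
    have h := (hY y).2
    rw [iteratedDeriv_family gψ hψ] at h
    exact smul_right_injective E (hfacne n) h
  have hXeq : X = fun y => fcoef gφ m y := funext fun y => (hΦm y).symm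
  have hYeq : Y = fun y => fcoef gψ n y := funext fun y => (hΨn y).symm
  have hXd : DifferentiableAt ℝ X x := by
    rw [hXeq]
    exact ((contDiff_fcoef hφ m).differentiable (by simp)).differentiableAt
  have hYd : DifferentiableAt ℝ Y x := by
    rw [hYeq]
    exact ((contDiff_fcoef hψ n).differentiable (by simp)).differentiableAt
  have hfcoefd : ∀ (g : ℝ × E → E), ContDiff ℝ (⊤:ℕ∞) g → ∀ i : ℕ,
      DifferentiableAt ℝ (fun y => fcoef g i y) x := fun g hg i =>
    ((contDiff_fcoef hg i).differentiable (by simp)).differentiableAt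
  set DYX := fderiv ℝ Y x (X x) with hDYX
  set DXY := fderiv ℝ X x (Y x) with hDXY
  set B := DYX - DXY with hB
  -- curves
  set u : ℝ → E := fun t => gφ (t, x) with hu
  set P : ℝ → E := fun t => gψ (t, u t) with hP
  set γ : ℝ → E := fun t => x + t^N • B with hγ
  set v : ℝ → E := fun t => gψ (t, γ t) with hv
  set K : ℝ → E := fun t => gψi (t, gφi (t, gψ (t, gφ (t, x))))  with hK
  have hφi0 : ∀ y, gφi (0,y) = y := by
    intro y
    have h := hφinv1 0 y
    rwa [hφ0] at h
  have hucont : Continuous u := hφ.continuous.comp (continuous_id.prodMk continuous_const)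
  have hu0 : u 0 = x := hφ0 x
  have hPcont : Continuous P := hψ.continuous.comp (continuous_id.prodMk hucont)
  have hP0 : P 0 = x := by
    show gψ (0, u 0) = x
    rw [hu0]; exact hψ0 x
  have hγcont : Continuous γ := continuous_const.add ((continuous_pow N).smul continuous_const)
  have hγ0 : γ 0 = x := by
    rw [hγ]
    simp [zero_pow (by omega : N ≠ 0)]
  have hvcont : Continuous v := hψ.continuous.comp (continuous_id.prodMk hγcont)
  have hv0 : v 0 = x := by
    show gψ (0, γ 0) = x
    rw [hγ0]; exact hψ0 x
  have hKsmooth : ContDiff ℝ (⊤:ℕ∞) K :=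
    hψi.comp (contDiff_id.prodMk (hφi.comp (contDiff_id.prodMk (hψ.comp (contDiff_id.prodMk
      (hφ.comp (contDiff_id.prodMk contDiff_const)))))))
  have hKcont : Continuous K := hKsmooth.continuous
  have hψi0 : ∀ y, gψi (0,y) = y := by
    intro y
    have h := hψinv1 0 y
    rwa [hψ0] at h
  have hK0 : K 0 = x := by
    show gψi (0, gφi (0, gψ (0, gφ (0, x)))) = x
    rw [hφ0, hψ0, hφi0, hψi0]
  -- expansion of u
  have E1 : (fun t : ℝ => u t - ∑ i ∈ Finset.range (N+1), t^i • fcoef gφ i x)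
      =o[𝓝 (0:ℝ)] fun t => t^N := family_expand hφ N continuous_const rfl
  have hagree_u : ∀ i, i ≤ m → fcoef gφ i x
      = ((if i = 0 then x else 0) + (if i = m then X x else 0)) := by
    intro i hi
    rcases Nat.eq_zero_or_pos i with rfl | hipos
    · rw [if_pos rfl, if_neg (by omega : ¬ ((0:ℕ) = m)), add_zero, hfΦ0]
    · rcases eq_or_lt_of_le hi with hieq | hlt
      · subst hieq
        rw [if_neg (by omega : ¬ (i = 0)), if_pos rfl, zero_add, hΦm]
      · rw [hΦ i hipos hlt x, if_neg (by omega : ¬ (i = 0)),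
          if_neg (by omega : ¬ (i = m)), add_zero]
  have hsum_u : ∀ t : ℝ, ∑ i ∈ Finset.range (N+1),
      t^i • ((if i = 0 then x else 0) + (if i = m then X x else 0)) = x + t^m • X x := by
    intro t
    rw [Finset.sum_congr rfl (fun i _ => smul_add (t^i) (if i = 0 then x else 0)
        (if i = m then X x else 0)),
      Finset.sum_add_distrib, single_sum N 0 (by omega) x t, single_sum N m hmN (X x) t,
      pow_zero, one_smul]
  have hu_m : (fun t : ℝ => u t - x - t^m • X x) =o[𝓝 (0:ℝ)] fun t => t^m := by
    have h1 := E1.trans_isBigO (pow_isBigO_pow hmN)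
    have h2 := sum_sub_littleO (fun i => fcoef gφ i x)
      (fun i => (if i = 0 then x else 0) + (if i = m then X x else 0)) N m hagree_u
    refine (h1.add h2).congr (fun t => ?_) (fun t => rfl)
    rw [hsum_u t]
    abel
  -- expansion of P = gψ (t, u t)
  have claimP : ∀ i ∈ Finset.range (N+1), (fun t : ℝ =>
      t^i • fcoef gψ i (u t) - ((if i = 0 then u t else 0)
        + t^i • (if i = 0 then 0 else fcoef gψ i x)
        + (if i = n then t^N • DYX else 0))) =o[𝓝 (0:ℝ)] fun t => t^N := by
    intro i hi
    rw [Finset.mem_range] at hi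
    rcases Nat.eq_zero_or_pos i with rfl | hipos
    · refine (isLittleO_zero _ _ : (fun _ : ℝ => (0:E)) =o[𝓝 (0:ℝ)] fun t => t^N).congr
        (fun t => ?_) (fun t => rfl)
      symm
      rw [if_pos rfl, if_pos rfl, if_neg (by omega : ¬ ((0:ℕ) = n)), hfΨ0 (u t),
        pow_zero, one_smul, smul_zero, add_zero, add_zero, sub_self]
    · rcases lt_trichotomy i n with hlt | hieq | hgt
      · refine (isLittleO_zero _ _ : (fun _ : ℝ => (0:E)) =o[𝓝 (0:ℝ)] fun t => t^N).congr
          (fun t => ?_) (fun t => rfl)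
        symm
        rw [hΨ i hipos hlt (u t), hΨ i hipos hlt x, if_neg (by omega : ¬ (i = 0)),
          if_neg (by omega : ¬ (i = 0)), if_neg (by omega : ¬ (i = n))]
        simp
      · subst hieq
        have hc := comp_expand (w := Y) hYd hm hu_m
        have hsm := smul_pow_littleO hc i
        refine hsm.congr (fun t => ?_) (fun t => ?_)
        · have hNsm : t^i • t^m • (fderiv ℝ Y x (X x)) = t^N • DYX := by
            rw [hDYX, smul_smul, ← pow_add, show i + m = N by first | omega | (rw [hNdef]; omega) | rw [hNdef]]
          rw [smul_sub, smul_sub, hNsm, hΨn (u t)]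
          simp only [if_neg (by omega : ¬ (i = 0)), if_pos rfl]
          rw [hΨn x]
          abel
        · rw [show i + m = N by first | omega | (rw [hNdef]; omega) | rw [hNdef]]
      · -- i > n
        have hc := comp_expand (w := fun y => fcoef gψ i y) (hfcoefd gψ hψ i) hm hu_m
        have hO : (fun t => fcoef gψ i (u t) - fcoef gψ i x) =O[𝓝 (0:ℝ)] fun t => t^m := by
          have := hc.isBigO.add
            (smul_const_isBigO (fderiv ℝ (fun y => fcoef gψ i y) x (X x)) m)
          exact this.congr (fun t => by abel) (fun t => rfl)
        have hsm := smul_pow_bigO hO i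
        have hlit : (fun t => t^i • (fcoef gψ i (u t) - fcoef gψ i x)) =o[𝓝 (0:ℝ)]
            fun t => t^N := hsm.trans_isLittleO (isLittleO_pow_pow (by omega : N < i + m))
        refine hlit.congr (fun t => ?_) (fun t => rfl)
        rw [smul_sub]
        simp only [if_neg (by omega : ¬ (i = 0)), if_neg (by omega : ¬ (i = n))]
        abel
  have hsumP := IsLittleO.fun_sum claimP
  have EP1 : (fun t : ℝ => P t - ∑ i ∈ Finset.range (N+1), t^i • fcoef gψ i (u t))
      =o[𝓝 (0:ℝ)] fun t => t^N := family_expand hψ N hucont hu0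
  have EPsum : (fun t : ℝ => (∑ i ∈ Finset.range (N+1), t^i • fcoef gψ i (u t))
      - (u t + (∑ i ∈ Finset.range (N+1), t^i • (if i = 0 then 0 else fcoef gψ i x))
        + t^N • DYX)) =o[𝓝 (0:ℝ)] fun t => t^N := by
    refine hsumP.congr (fun t => ?_) (fun t => rfl)
    rw [Finset.sum_sub_distrib]
    congr 1
    rw [Finset.sum_add_distrib, Finset.sum_add_distrib,
      sum_ite_const N 0 (by omega) (u t), sum_ite_const N n hnN (t^N • DYX)]
  have EP : (fun t : ℝ => P t - (∑ i ∈ Finset.range (N+1), t^i • fcoef gφ i x)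
      - (∑ i ∈ Finset.range (N+1), t^i • (if i = 0 then 0 else fcoef gψ i x)) - t^N • DYX)
      =o[𝓝 (0:ℝ)] fun t => t^N := by
    have hcomb := (EP1.add EPsum).add E1
    refine hcomb.congr (fun t => ?_) (fun t => rfl)
    abel
  -- expansion of v = gψ (t, γ t)
  have hγexp : (fun t : ℝ => γ t - x - t^N • B) =o[𝓝 (0:ℝ)] fun t => t^N := by
    refine (isLittleO_zero _ _ : (fun _ : ℝ => (0:E)) =o[𝓝 (0:ℝ)] fun t => t^N).congr
      (fun t => ?_) (fun t => rfl)
    show (0:E) = γ t - x - t^N • B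
    simp only [hγ]
    abel
  have claimV : ∀ i ∈ Finset.range (N+1), (fun t : ℝ =>
      t^i • fcoef gψ i (γ t) - ((if i = 0 then γ t else 0)
        + t^i • (if i = 0 then 0 else fcoef gψ i x))) =o[𝓝 (0:ℝ)] fun t => t^N := by
    intro i hi
    rw [Finset.mem_range] at hi
    rcases Nat.eq_zero_or_pos i with rfl | hipos
    · refine (isLittleO_zero _ _ : (fun _ : ℝ => (0:E)) =o[𝓝 (0:ℝ)] fun t => t^N).congr
        (fun t => ?_) (fun t => rfl)
      symm
      rw [if_pos rfl, if_pos rfl, hfΨ0 (γ t), pow_zero, one_smul, smul_zero, add_zero,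
        sub_self]
    · have hc := comp_expand (w := fun y => fcoef gψ i y) (hfcoefd gψ hψ i)
        (by omega : 1 ≤ N) hγexp
      have hO : (fun t => fcoef gψ i (γ t) - fcoef gψ i x) =O[𝓝 (0:ℝ)] fun t => t^N := by
        have := hc.isBigO.add
          (smul_const_isBigO (fderiv ℝ (fun y => fcoef gψ i y) x B) N)
        exact this.congr (fun t => by abel) (fun t => rfl)
      have hsm := smul_pow_bigO hO i
      have hlit : (fun t => t^i • (fcoef gψ i (γ t) - fcoef gψ i x)) =o[𝓝 (0:ℝ)]
          fun t => t^N := hsm.trans_isLittleO (isLittleO_pow_pow (by omega : N < i + N))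
      refine hlit.congr (fun t => ?_) (fun t => rfl)
      rw [smul_sub]
      simp only [if_neg (by omega : ¬ (i = 0))]
      abel
  have hsumV := IsLittleO.fun_sum claimV
  have EV1 : (fun t : ℝ => v t - ∑ i ∈ Finset.range (N+1), t^i • fcoef gψ i (γ t))
      =o[𝓝 (0:ℝ)] fun t => t^N := family_expand hψ N hγcont hγ0
  have EV : (fun t : ℝ => v t - γ t
      - (∑ i ∈ Finset.range (N+1), t^i • (if i = 0 then 0 else fcoef gψ i x)))
      =o[𝓝 (0:ℝ)] fun t => t^N := by
    have hcomb := EV1.add hsumV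
    refine hcomb.congr (fun t => ?_) (fun t => rfl)
    rw [Finset.sum_sub_distrib]
    rw [Finset.sum_add_distrib, sum_ite_const N 0 (by omega) (γ t)]
    abel
  -- v to order n
  have hv_n : (fun t : ℝ => v t - x - t^n • Y x) =o[𝓝 (0:ℝ)] fun t => t^n := by
    have h1 := EV.trans_isBigO (pow_isBigO_pow hnN)
    have h2 : (fun t : ℝ => (∑ i ∈ Finset.range (N+1),
        t^i • (if i = 0 then 0 else fcoef gψ i x))
        - ∑ i ∈ Finset.range (N+1), t^i • (if i = n then Y x else 0))
        =o[𝓝 (0:ℝ)] fun t => t^n := by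
      refine sum_sub_littleO _ _ N n ?_
      intro i hi
      rcases Nat.eq_zero_or_pos i with rfl | hipos
      · rw [if_pos rfl, if_neg (by omega : ¬ ((0:ℕ) = n))]
      · rcases eq_or_lt_of_le hi with hieq | hlt
        · rw [if_neg (by omega : ¬ (i = 0)), if_pos hieq, hieq, hΨn x]
        · rw [if_neg (by omega : ¬ (i = 0)), if_neg (by omega : ¬ (i = n)),
            hΨ i hipos hlt x]
    have h3 : (fun t : ℝ => t^N • B) =o[𝓝 (0:ℝ)] fun t => t^n :=
      (smul_const_isBigO B N).trans_isLittleO (isLittleO_pow_pow hnltN)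
    have hcomb := (h1.add h2).add h3
    refine hcomb.congr (fun t => ?_) (fun t => rfl)
    rw [single_sum N n hnN (Y x) t]
    simp only [hγ]
    abel
  -- expansion of R = gφ (t, v t)
  set R : ℝ → E := fun t => gφ (t, v t) with hR
  have claimR : ∀ i ∈ Finset.range (N+1), (fun t : ℝ =>
      t^i • fcoef gφ i (v t) - ((if i = 0 then v t else 0)
        + t^i • (if i = 0 then 0 else fcoef gφ i x)
        + (if i = m then t^N • DXY else 0))) =o[𝓝 (0:ℝ)] fun t => t^N := by
    intro i hi
    rw [Finset.mem_range] at hi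
    rcases Nat.eq_zero_or_pos i with rfl | hipos
    · refine (isLittleO_zero _ _ : (fun _ : ℝ => (0:E)) =o[𝓝 (0:ℝ)] fun t => t^N).congr
        (fun t => ?_) (fun t => rfl)
      symm
      rw [if_pos rfl, if_pos rfl, if_neg (by omega : ¬ ((0:ℕ) = m)), hfΦ0 (v t),
        pow_zero, one_smul, smul_zero, add_zero, add_zero, sub_self]
    · rcases lt_trichotomy i m with hlt | hieq | hgt
      · refine (isLittleO_zero _ _ : (fun _ : ℝ => (0:E)) =o[𝓝 (0:ℝ)] fun t => t^N).congr
          (fun t => ?_) (fun t => rfl)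
        symm
        rw [hΦ i hipos hlt (v t), hΦ i hipos hlt x, if_neg (by omega : ¬ (i = 0)),
          if_neg (by omega : ¬ (i = 0)), if_neg (by omega : ¬ (i = m))]
        simp
      · subst hieq
        have hc := comp_expand (w := X) hXd hn hv_n
        have hsm := smul_pow_littleO hc i
        refine hsm.congr (fun t => ?_) (fun t => ?_)
        · have hNsm : t^i • t^n • (fderiv ℝ X x (Y x)) = t^N • DXY := by
            rw [hDXY, smul_smul, ← pow_add, show i + n = N by first | omega | (rw [hNdef]; omega) | rw [hNdef]]
          rw [smul_sub, smul_sub, hNsm, hΦm (v t)]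
          simp only [if_neg (by omega : ¬ (i = 0)), if_pos rfl]
          rw [hΦm x]
          abel
        · rw [show i + n = N by first | omega | (rw [hNdef]; omega) | rw [hNdef]]
      · -- i > m
        have hc := comp_expand (w := fun y => fcoef gφ i y) (hfcoefd gφ hφ i) hn hv_n
        have hO : (fun t => fcoef gφ i (v t) - fcoef gφ i x) =O[𝓝 (0:ℝ)] fun t => t^n := by
          have := hc.isBigO.add
            (smul_const_isBigO (fderiv ℝ (fun y => fcoef gφ i y) x (Y x)) n)
          exact this.congr (fun t => by abel) (fun t => rfl)
        have hsm := smul_pow_bigO hO i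
        have hlit : (fun t => t^i • (fcoef gφ i (v t) - fcoef gφ i x)) =o[𝓝 (0:ℝ)]
            fun t => t^N := hsm.trans_isLittleO
              (isLittleO_pow_pow (by first | omega | (rw [hNdef]; omega) | rw [hNdef] : N < i + n))
        refine hlit.congr (fun t => ?_) (fun t => rfl)
        rw [smul_sub]
        simp only [if_neg (by omega : ¬ (i = 0)), if_neg (by omega : ¬ (i = m))]
        abel
  have hsumR := IsLittleO.fun_sum claimR
  have ER1 : (fun t : ℝ => R t - ∑ i ∈ Finset.range (N+1), t^i • fcoef gφ i (v t))
      =o[𝓝 (0:ℝ)] fun t => t^N := family_expand hφ N hvcont hv0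
  have ER : (fun t : ℝ => R t - v t
      - (∑ i ∈ Finset.range (N+1), t^i • (if i = 0 then 0 else fcoef gφ i x))
      - t^N • DXY) =o[𝓝 (0:ℝ)] fun t => t^N := by
    have hcomb := ER1.add hsumR
    refine hcomb.congr (fun t => ?_) (fun t => rfl)
    rw [Finset.sum_sub_distrib, Finset.sum_add_distrib, Finset.sum_add_distrib,
      sum_ite_const N 0 (by omega) (v t), sum_ite_const N m hmN (t^N • DXY)]
    abel
  -- compare R and P
  have hRP : (fun t : ℝ => R t - P t) =o[𝓝 (0:ℝ)] fun t => t^N := by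
    have hcomb := (ER.add EV).sub EP
    refine hcomb.congr (fun t => ?_) (fun t => rfl)
    have h1 : (∑ i ∈ Finset.range (N+1), t^i • fcoef gφ i x)
        - (∑ i ∈ Finset.range (N+1), t^i • (if i = 0 then 0 else fcoef gφ i x)) = x := by
      rw [← Finset.sum_sub_distrib]
      have hterm : ∀ i ∈ Finset.range (N+1), t^i • fcoef gφ i x
          - t^i • (if i = 0 then 0 else fcoef gφ i x)
          = t^i • (if i = 0 then x else 0) := by
        intro i _
        rcases Nat.eq_zero_or_pos i with rfl | hip
        · rw [if_pos rfl, if_pos rfl, hfΦ0, smul_zero, sub_zero]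
        · rw [if_neg (by omega : ¬ (i = 0)), if_neg (by omega : ¬ (i = 0)), sub_self,
            smul_zero]
      rw [Finset.sum_congr rfl hterm, single_sum N 0 (by omega) x t, pow_zero, one_smul]
    have h1' : (∑ i ∈ Finset.range (N+1), t^i • fcoef gφ i x)
        = x + (∑ i ∈ Finset.range (N+1), t^i • (if i = 0 then 0 else fcoef gφ i x)) :=
      sub_eq_iff_eq_add.mp h1
    rw [h1']
    simp only [hγ, hB, smul_sub]
    abel
  -- first cancellation
  have hc1cont : Continuous (fun t : ℝ => gφi (t, P t)) :=
    hφi.continuous.comp (continuous_id.prodMk hPcont)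
  have hc10 : (fun t : ℝ => gφi (t, P t)) 0 = x := by
    show gφi (0, P 0) = x
    rw [hP0, hφi0]
  have hPRo : (fun t : ℝ => gφ (t, (fun s : ℝ => gφi (s, P s)) t) - gφ (t, v t))
      =o[𝓝 (0:ℝ)] fun t => t^N := by
    refine hRP.neg_left.congr (fun t => ?_) (fun t => rfl)
    show -(R t - P t) = gφ (t, gφi (t, P t)) - gφ (t, v t)
    rw [hφinv2 t (P t)]
    simp only [hR]
    abel
  have step1 := cancel hφ hφ0 hc1cont hvcont hc10 hv0 N hPRo
  -- second cancellation
  have hKψ : ∀ t : ℝ, gψ (t, K t) = gφi (t, P t) := by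
    intro t
    show gψ (t, gψi (t, gφi (t, gψ (t, gφ (t, x))))) = gφi (t, P t)
    rw [hψinv2]
  have step1' : (fun t : ℝ => gψ (t, K t) - gψ (t, γ t)) =o[𝓝 (0:ℝ)] fun t => t^N := by
    refine step1.congr (fun t => ?_) (fun t => rfl)
    rw [hKψ t]
  have step2 := cancel hψ hψ0 hKcont hγcont hK0 hγ0 N step1'
  -- extract the jets
  have CT := curve_taylor K hKsmooth N
  have hγsum : ∀ t : ℝ, ∑ i ∈ Finset.range (N+1),
      t^i • ((if i = 0 then x else 0) + (if i = N then B else 0)) = γ t := by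
    intro t
    rw [Finset.sum_congr rfl (fun i _ => smul_add (t^i) (if i = 0 then x else 0)
        (if i = N then B else 0)),
      Finset.sum_add_distrib, single_sum N 0 (by omega) x t, single_sum N N le_rfl B t,
      pow_zero, one_smul]
  have hpoly : (fun t : ℝ => ∑ i ∈ Finset.range (N+1), t^i •
      ((((i.factorial:ℝ))⁻¹ • iteratedDeriv i K 0)
        - ((if i = 0 then x else 0) + (if i = N then B else 0)))) =o[𝓝 (0:ℝ)]
      fun t => t^N := by
    have hcomb := step2.sub CT
    refine hcomb.congr (fun t => ?_) (fun t => rfl)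
    rw [Finset.sum_congr rfl (fun i (_ : i ∈ Finset.range (N+1)) => smul_sub (t^i)
        ((((i.factorial:ℝ))⁻¹ • iteratedDeriv i K 0))
        ((if i = 0 then x else 0) + (if i = N then B else 0))),
      Finset.sum_sub_distrib, hγsum t]
    abel
  have hcoef := polyvanish N _ (hpoly.mono nhdsWithin_le_nhds)
  constructor
  · intro l hl1 hlN
    have h := hcoef l (by omega)
    rw [if_neg (by omega : ¬ (l = 0)), if_neg (by rw [hNdef]; omega : ¬ (l = N)), add_zero,
      sub_zero] at h
    exact (smul_eq_zero.mp h).resolve_left (inv_ne_zero (hfacne l))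
  · have h := hcoef N le_rfl
    rw [if_neg (by omega : ¬ (N = 0)), if_pos rfl, zero_add, sub_eq_zero] at h
    have h2 := congrArg (fun z : E => (N.factorial:ℝ) • z) h
    rw [smul_smul, mul_inv_cancel₀ (hfacne N), one_smul] at h2
    exact h2

end CommFlows


/-- **The first non-vanishing derivative of a commutator of curves of diffeomorphisms is
the Lie bracket.**  Let `φ, ψ : ℝ × ℝⁿ → ℝⁿ` be smooth curves of diffeomorphisms through
the identity with smooth inverse families `φi, ψi`.  If the first non-vanishing
`t`-derivatives of `φ` and `ψ` at `0` are `m!·X` and `n!·Y` respectively, then the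
commutator `[φ,ψ](t,x) = ψ_t⁻¹(φ_t⁻¹(ψ_t(φ_t(x))))` has vanishing `t`-derivatives at `0`
of orders `1, …, m+n−1`, and its `(m+n)`-th derivative is `(m+n)!·[X,Y]`, where
`[X,Y](x) = DY(x)·X(x) − DX(x)·Y(x)`. -/
theorem commutator_of_flows_first_nonvanishing_derivative {d : ℕ}
    (φ ψ φi ψi : ℝ → (Fin d → ℝ) → (Fin d → ℝ))
    (hφ : ContDiff ℝ (⊤ : ℕ∞) fun p : ℝ × (Fin d → ℝ) => φ p.1 p.2)
    (hψ : ContDiff ℝ (⊤ : ℕ∞) fun p : ℝ × (Fin d → ℝ) => ψ p.1 p.2)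
    (hφi : ContDiff ℝ (⊤ : ℕ∞) fun p : ℝ × (Fin d → ℝ) => φi p.1 p.2)
    (hψi : ContDiff ℝ (⊤ : ℕ∞) fun p : ℝ × (Fin d → ℝ) => ψi p.1 p.2)
    (hφ0 : ∀ x, φ 0 x = x) (hψ0 : ∀ x, ψ 0 x = x)
    (hφinv : ∀ t x, φi t (φ t x) = x ∧ φ t (φi t x) = x)
    (hψinv : ∀ t x, ψi t (ψ t x) = x ∧ ψ t (ψi t x) = x)
    (m n : ℕ) (hm : 1 ≤ m) (hn : 1 ≤ n)
    (X Y : (Fin d → ℝ) → (Fin d → ℝ))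
    (hX : ∀ x, (∀ j, 1 ≤ j → j < m → iteratedDeriv j (fun t => φ t x) 0 = 0) ∧
      iteratedDeriv m (fun t => φ t x) 0 = (m.factorial : ℝ) • X x)
    (hY : ∀ x, (∀ j, 1 ≤ j → j < n → iteratedDeriv j (fun t => ψ t x) 0 = 0) ∧
      iteratedDeriv n (fun t => ψ t x) 0 = (n.factorial : ℝ) • Y x) :
    ∀ x, (∀ l, 1 ≤ l → l < m + n →
        iteratedDeriv l (fun t => ψi t (φi t (ψ t (φ t x)))) 0 = 0) ∧
      iteratedDeriv (m + n) (fun t => ψi t (φi t (ψ t (φ t x)))) 0 =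
        ((m + n).factorial : ℝ) • (fderiv ℝ Y x (X x) - fderiv ℝ X x (Y x)) := by
  intro x
  exact CommFlows.main (fun p => φ p.1 p.2) (fun p => ψ p.1 p.2)
    (fun p => φi p.1 p.2) (fun p => ψi p.1 p.2) hφ hψ hφi hψi
    (fun y => hφ0 y) (fun y => hψ0 y)
    (fun t y => (hφinv t y).2) (fun t y => (hψinv t y).2)
    (fun t y => (hφinv t y).1) (fun t y => (hψinv t y).1)
    m n hm hn X Y hX hY x
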